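/- Let V and W be finite-dimensional real vector spaces and let β : V × V → W be a symmetric bilinear map such that β(v,v) ≠ 0 for every v ≠ 0, and assume dim W < dim V. Then there exist linearly independent vectors v₁, v₂ ∈ V such that β(v₁,v₁) = β(v₂,v₂) and β(v₁,v₂) = 0. -/

import Mathlib

open MvPolynomial

noncomputable section OtsukiAux

lemma Otsuki.degree_fintype {k : ℕ} (d : Fin k →₀ ℕ) : d.degree = ∑ i, d i := by
  rw [Finsupp.degree]
  exact Finset.sum_subset (Finset.subset_univ _) (by
    intro i _ hi
    simpa using (Finsupp.notMem_support_iff.mp hi))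

lemma Otsuki.isHomog_degree {n : ℕ} {p : MvPolynomial (Fin n) ℂ} {e : ℕ}
    (h : p.IsHomogeneous e) {d : Fin n →₀ ℕ} (hd : coeff d p ≠ 0) : d.degree = e := by
  rw [Finsupp.degree_eq_weight_one]
  exact h hd

lemma Otsuki.hc_mul_homog {n : ℕ} (g q : MvPolynomial (Fin n) ℂ) (hq : q.IsHomogeneous 2)
    (N : ℕ) (hN : 2 ≤ N) :
    homogeneousComponent N (g * q) = homogeneousComponent (N - 2) g * q := by
  conv_lhs => rw [← sum_homogeneousComponent g, Finset.sum_mul]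
  rw [map_sum]
  have hterm : ∀ e : ℕ, homogeneousComponent N (homogeneousComponent e g * q)
      = if e = N - 2 then homogeneousComponent e g * q else 0 := by
    intro e
    have h1 : (homogeneousComponent e g * q).IsHomogeneous (e + 2) :=
      (homogeneousComponent_isHomogeneous e g).mul hq
    rw [homogeneousComponent_of_mem ((mem_homogeneousSubmodule _ _).mpr h1)]
    congr 1
    simp only [eq_iff_iff]
    omega
  simp_rw [hterm]
  rw [Finset.sum_ite_eq' (Finset.range (g.totalDegree + 1))]
  split_ifs with h
  · rfl
  · rw [Finset.mem_range, not_lt] at h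
    rw [homogeneousComponent_eq_zero _ _ (by omega), zero_mul]

theorem Otsuki.quadrics_common_zero_aux (n' m' : ℕ) (hmn : m' < n')
    (q : Fin (m' + 1) → MvPolynomial (Fin (n' + 1)) ℂ)
    (hq : ∀ j, (q j).IsHomogeneous 2)
    (hcon : ∀ z : Fin (n' + 1) → ℂ, z ≠ 0 → ∃ j, eval z (q j) ≠ 0) : False := by
  have hn' : 1 ≤ n' := by omega
  -- Nullstellensatz step
  set I : Ideal (MvPolynomial (Fin (n' + 1)) ℂ) := Ideal.span (Set.range q) with hI
  have hXrad : ∀ i : Fin (n' + 1), (X i : MvPolynomial (Fin (n' + 1)) ℂ) ∈ I.radical := by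
    intro i
    rw [← vanishingIdeal_zeroLocus_eq_radical (K := ℂ)]
    intro x hx
    have hx0 : x = 0 := by
      by_contra hx0
      obtain ⟨j, hj⟩ := hcon x hx0
      exact hj (hx (q j) (Ideal.subset_span ⟨j, rfl⟩))
    simp [hx0]
  choose Npow hNpow using fun i => Ideal.mem_radical_iff.mp (hXrad i)
  set N : ℕ := 2 + Finset.univ.sup Npow with hNdef
  have hN2 : 2 ≤ N := Nat.le_add_right 2 _
  have hXN : ∀ i, (X i : MvPolynomial (Fin (n' + 1)) ℂ) ^ N ∈ I := by
    intro i
    have hle : Npow i ≤ N := le_trans (Finset.le_sup (Finset.mem_univ i)) (Nat.le_add_left _ 2)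
    have : (X i : MvPolynomial (Fin (n' + 1)) ℂ) ^ N = X i ^ Npow i * X i ^ (N - Npow i) := by
      rw [← pow_add]; congr 1; omega
    rw [this]
    exact I.mul_mem_right _ (hNpow i)
  choose g hg using fun i => (Ideal.mem_span_range_iff_exists_fun).mp (hXN i)
  -- homogeneous refinement
  set g' : Fin (n' + 1) → Fin (m' + 1) → MvPolynomial (Fin (n' + 1)) ℂ :=
    fun i j => homogeneousComponent (N - 2) (g i j) with hg'def
  have hg'h : ∀ i j, (g' i j).IsHomogeneous (N - 2) :=
    fun i j => homogeneousComponent_isHomogeneous _ _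
  have hg' : ∀ i, ∑ j, g' i j * q j = (X i : MvPolynomial (Fin (n' + 1)) ℂ) ^ N := by
    intro i
    have h1 := congrArg (homogeneousComponent N) (hg i)
    rw [map_sum] at h1
    have h2 : ∀ j : Fin (m' + 1), homogeneousComponent N (g i j * q j) = g' i j * q j :=
      fun j => Otsuki.hc_mul_homog (g i j) (q j) (hq j) N hN2
    simp_rw [h2] at h1
    rwa [homogeneousComponent_of_mem
      ((mem_homogeneousSubmodule _ _).mpr (isHomogeneous_X_pow i N)), if_pos rfl] at h1
  clear hg hNpow hXN hXrad hcon
  set D : ℕ := (n' + 1) * (N - 1) with hDdef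
  set T : ℕ → Set (MvPolynomial (Fin (n' + 1)) ℂ) := fun d =>
    {p | ∃ (α : Fin (m' + 1) → ℕ) (σ : Fin (n' + 1) →₀ ℕ), 2 * (∑ j, α j) + σ.degree = d ∧ σ.degree ≤ D ∧
      p = (∏ j, q j ^ α j) * monomial σ 1} with hTdef
  -- multiplication by q j maps span (T d) to span (T (d+2))
  have hmul : ∀ (d : ℕ) (j : Fin (m' + 1)) (p : MvPolynomial (Fin (n' + 1)) ℂ),
      p ∈ Submodule.span ℂ (T d) → q j * p ∈ Submodule.span ℂ (T (d + 2)) := by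
    intro d j p hp
    have h2 : Submodule.map (LinearMap.mulLeft ℂ (q j)) (Submodule.span ℂ (T d))
        ≤ Submodule.span ℂ (T (d + 2)) := by
      rw [Submodule.map_span, Submodule.span_le]
      rintro _ ⟨_, ⟨α, σ, hσ1, hσ2, rfl⟩, rfl⟩
      apply Submodule.subset_span
      classical
      refine ⟨fun j' => α j' + (if j' = j then 1 else 0), σ, ?_, hσ2, ?_⟩
      · have : ∑ j', (α j' + (if j' = j then 1 else 0)) = (∑ j', α j') + 1 := by
          rw [Finset.sum_add_distrib]
          simp [Finset.sum_ite_eq']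
        rw [this]; omega
      · have hprod : (∏ j', q j' ^ (α j' + (if j' = j then 1 else 0)))
            = q j * ∏ j', q j' ^ α j' := by
          simp only [pow_add, Finset.prod_mul_distrib]
          rw [mul_comm]
          congr 1
          rw [Finset.prod_eq_single j]
          · simp
          · intro b _ hb; simp [hb]
          · simp
        rw [hprod, LinearMap.mulLeft_apply, mul_assoc]
    exact h2 ⟨p, hp, rfl⟩
  -- spanning lemma
  have hspan : ∀ (d : ℕ) (σ : Fin (n' + 1) →₀ ℕ), σ.degree = d →
      (monomial σ 1 : MvPolynomial (Fin (n' + 1)) ℂ) ∈ Submodule.span ℂ (T d) := by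
    intro d
    induction d using Nat.strong_induction_on with
    | _ d IH =>
      intro σ hσ
      by_cases hdD : d ≤ D
      · apply Submodule.subset_span
        exact ⟨0, σ, by simp [hσ], hσ ▸ hdD, by simp⟩
      · push_neg at hdD
        -- find i with N ≤ σ i
        have hex : ∃ i, N ≤ σ i := by
          by_contra hno
          push_neg at hno
          have : σ.degree ≤ (n' + 1) * (N - 1) := by
            rw [Otsuki.degree_fintype]
            calc ∑ i, σ i ≤ ∑ _i : Fin (n' + 1), (N - 1) :=
                  Finset.sum_le_sum (fun i _ => by have := hno i; omega)
              _ = (n' + 1) * (N - 1) := by simp [Finset.sum_const, mul_comm]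
          omega
        obtain ⟨i, hi⟩ := hex
        obtain ⟨σ', hσ'add⟩ : ∃ σ' : Fin (n' + 1) →₀ ℕ, σ' + Finsupp.single i N = σ :=
          ⟨σ - Finsupp.single i N, tsub_add_cancel_of_le (Finsupp.single_le_iff.mpr hi)⟩
        have hσ'deg : σ'.degree = d - N := by
          classical
          have h1 := congrArg (fun τ : Fin (n' + 1) →₀ ℕ => ∑ i', τ i') hσ'add
          simp only [Finsupp.add_apply, Finset.sum_add_distrib] at h1
          have h2 : ∑ i' : Fin (n' + 1), (Finsupp.single i N) i' = N := by
            simp [Finsupp.single_apply, Finset.sum_ite_eq']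
          rw [Otsuki.degree_fintype] at hσ ⊢
          omega
        have hdN : N ≤ d := by
          have : (n' + 1) * (N-1) ≥ 1 * (N-1) := Nat.mul_le_mul_right _ (by omega)
          omega
        have hmono : (monomial σ 1 : MvPolynomial (Fin (n' + 1)) ℂ)
            = ∑ j, q j * (g' i j * monomial σ' 1) := by
          have : (monomial σ 1 : MvPolynomial (Fin (n' + 1)) ℂ)
              = (X i ^ N) * monomial σ' 1 := by
            have hcomm : (Finsupp.single i N) + σ' = σ := by
              rw [← hσ'add]; exact add_comm _ _
            rw [X_pow_eq_monomial, monomial_mul, one_mul, hcomm]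
          rw [this, ← hg' i, Finset.sum_mul]
          congr 1; ext j
          ring_nf
        rw [hmono]
        apply Submodule.sum_mem
        intro j _
        have hd2 : d - 2 < d := by omega
        have hhom : (g' i j * monomial σ' 1).IsHomogeneous (d - 2) := by
          have := (hg'h i j).mul (isHomogeneous_monomial (1 : ℂ) (rfl : σ'.degree = σ'.degree))
          convert this using 1
          omega
        have hmem : g' i j * monomial σ' 1 ∈ Submodule.span ℂ (T (d - 2)) := by
          rw [show g' i j * monomial σ' 1
            = ∑ τ ∈ (g' i j * monomial σ' 1).support, monomial τ (coeff τ (g' i j * monomial σ' 1))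
            from (support_sum_monomial_coeff _).symm]
          apply Submodule.sum_mem
          intro τ hτ
          have hτdeg : τ.degree = d - 2 :=
            Otsuki.isHomog_degree hhom (by simpa using hτ)
          have : (monomial τ (coeff τ (g' i j * monomial σ' 1)) : MvPolynomial (Fin (n' + 1)) ℂ)
              = coeff τ (g' i j * monomial σ' 1) • monomial τ 1 := by
            simp [smul_monomial]
          rw [this]
          exact Submodule.smul_mem _ _ (IH (d - 2) hd2 τ hτdeg)
        have := hmul (d - 2) j _ hmem
        rwa [Nat.sub_add_cancel (by omega)] at this
  -- counting
  set t : ℕ := n' ^ (n' - 1) * (D + 1) ^ (n' + 1) with htdef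
  set d : ℕ := n' * t with hddef
  set τf : (Fin n' → Fin (t + 1)) → (Fin (n' + 1) →₀ ℕ) := fun a =>
    Finsupp.equivFunOnFinite.symm (Fin.snoc (fun j => (a j : ℕ)) (d - ∑ j, (a j : ℕ))) with hτdef
  have hsumle : ∀ a : Fin n' → Fin (t + 1), ∑ j, (a j : ℕ) ≤ d := by
    intro a
    calc ∑ j, (a j : ℕ) ≤ ∑ _j : Fin n', t := Finset.sum_le_sum (fun j _ => Fin.is_le _)
      _ = n' * t := by simp [mul_comm]
  have hτdeg : ∀ a, (τf a).degree = d := by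
    intro a
    rw [Otsuki.degree_fintype]
    simp only [hτdef, Finsupp.coe_equivFunOnFinite_symm]
    rw [Fin.sum_univ_castSucc]
    simp only [Fin.snoc_castSucc, Fin.snoc_last]
    have := hsumle a
    omega
  have hτinj : Function.Injective τf := by
    intro a b hab
    funext j
    have h1 : (τf a) (Fin.castSucc j) = (τf b) (Fin.castSucc j) := by rw [hab]
    simp only [hτdef, Finsupp.coe_equivFunOnFinite_symm, Fin.snoc_castSucc] at h1
    exact Fin.val_injective h1
  set G : ((Fin m' → Fin (d + 1)) × (Fin (n' + 1) → Fin (D + 1))) → MvPolynomial (Fin (n' + 1)) ℂ :=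
    fun p => ((∏ j : Fin m', q (Fin.castSucc j) ^ ((p.1 j : ℕ)))
      * q (Fin.last m') ^ ((d - (∑ i, (p.2 i : ℕ)) - 2 * ∑ j, (p.1 j : ℕ)) / 2))
      * monomial (Finsupp.equivFunOnFinite.symm fun i => ((p.2 i : ℕ))) 1 with hGdef
  have hTsub : T d ⊆ Set.range G := by
    rintro _ ⟨α, σ, h1, h2, rfl⟩
    have hαle : ∀ j, α j ≤ d := by
      intro j
      have : α j ≤ ∑ j', α j' :=
        Finset.single_le_sum (fun _ _ => Nat.zero_le _) (Finset.mem_univ j)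
      omega
    have hσle : ∀ i, σ i ≤ D := by
      intro i
      have : σ i ≤ σ.degree := by
        rw [Otsuki.degree_fintype]
        exact Finset.single_le_sum (fun _ _ => Nat.zero_le _) (Finset.mem_univ i)
      omega
    refine ⟨⟨fun j => ⟨α (Fin.castSucc j), by have := hαle (Fin.castSucc j); omega⟩,
             fun i => ⟨σ i, by have := hσle i; omega⟩⟩, ?_⟩
    simp only [hGdef]
    have e2 : (∑ i : Fin (n' + 1), σ i) = σ.degree := (Otsuki.degree_fintype σ).symm
    have e3 : ∑ j : Fin (m' + 1), α j = (∑ j : Fin m', α (Fin.castSucc j)) + α (Fin.last m') :=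
      Fin.sum_univ_castSucc _
    have e4 : (d - (∑ i : Fin (n' + 1), σ i) - 2 * ∑ j : Fin m', α (Fin.castSucc j)) / 2
        = α (Fin.last m') := by
      rw [e2]
      omega
    rw [e4]
    have e5 : (Finsupp.equivFunOnFinite.symm fun i : Fin (n' + 1) => σ i) = σ :=
      Finsupp.equivFunOnFinite_symm_coe σ
    rw [e5]
    congr 1
    rw [Fin.prod_univ_castSucc (fun j : Fin (m' + 1) => q j ^ α j)]
  have hvmem : ∀ a, (monomial (τf a) 1 : MvPolynomial (Fin (n' + 1)) ℂ)
      ∈ Submodule.span ℂ (Set.range G) :=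
    fun a => Submodule.span_mono hTsub (hspan d (τf a) (hτdeg a))
  have hvind : LinearIndependent ℂ
      (fun a : Fin n' → Fin (t + 1) => (monomial (τf a) 1 : MvPolynomial (Fin (n' + 1)) ℂ)) := by
    have := ((basisMonomials (Fin (n' + 1)) ℂ).linearIndependent).comp τf hτinj
    simpa [coe_basisMonomials, Function.comp_def] using this
  set P := Submodule.span ℂ (Set.range G) with hPdef
  set v' : (Fin n' → Fin (t + 1)) → P := fun a => ⟨monomial (τf a) 1, hvmem a⟩ with hv'def
  have hv' : LinearIndependent ℂ v' := by
    apply LinearIndependent.of_comp P.subtype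
    exact hvind
  have hcard1 : Cardinal.mk (Fin n' → Fin (t + 1)) ≤ Module.rank ℂ P := hv'.cardinal_le_rank
  have hcard2 : Module.rank ℂ P ≤
      Cardinal.mk ((Fin m' → Fin (d + 1)) × (Fin (n' + 1) → Fin (D + 1))) :=
    le_trans (rank_span_le _) Cardinal.mk_range_le
  have hfin : (t + 1) ^ n' ≤ (d + 1) ^ m' * (D + 1) ^ (n' + 1) := by
    have h := le_trans hcard1 hcard2
    rw [Cardinal.mk_fintype, Cardinal.mk_fintype] at h
    rw [Nat.cast_le] at h
    simpa [Fintype.card_fun, Fintype.card_prod] using h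
  have harith : (d + 1) ^ m' * (D + 1) ^ (n' + 1) < (t + 1) ^ n' := by
    have hm'n' : m' ≤ n' - 1 := by omega
    calc (d + 1) ^ m' * (D + 1) ^ (n' + 1)
        ≤ (d + 1) ^ (n' - 1) * (D + 1) ^ (n' + 1) :=
          Nat.mul_le_mul_right _ (Nat.pow_le_pow_right (by omega) hm'n')
      _ ≤ (n' * (t + 1)) ^ (n' - 1) * (D + 1) ^ (n' + 1) := by
          apply Nat.mul_le_mul_right
          apply Nat.pow_le_pow_left
          rw [hddef, Nat.mul_succ]
          omega
      _ = (n' ^ (n' - 1) * (D + 1) ^ (n' + 1)) * (t + 1) ^ (n' - 1) := by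
          rw [mul_pow]; ring
      _ = t * (t + 1) ^ (n' - 1) := by rw [htdef]
      _ < (t + 1) * (t + 1) ^ (n' - 1) := by
          apply Nat.mul_lt_mul_of_lt_of_le (Nat.lt_succ_self t) (le_refl _)
          exact Nat.pow_pos (Nat.succ_pos t)
      _ = (t + 1) ^ n' := by
          rw [← pow_succ']
          congr 1
          omega
  omega


theorem Otsuki.quadrics_common_zero (n m : ℕ) (hmn : m < n)
    (q : Fin m → MvPolynomial (Fin n) ℂ) (hq : ∀ j, (q j).IsHomogeneous 2) :
    ∃ z : Fin n → ℂ, z ≠ 0 ∧ ∀ j, eval z (q j) = 0 := by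
  have hn : 0 < n := Nat.lt_of_le_of_lt (Nat.zero_le m) hmn
  by_contra hcon
  push_neg at hcon
  rcases Nat.eq_zero_or_pos m with hm0 | hm
  · obtain ⟨j, hj⟩ := hcon (fun _ => 1) (by
      intro h
      have := congrFun h ⟨0, hn⟩
      simp at this)
    exact absurd j.2 (by omega)
  · obtain ⟨m', rfl⟩ : ∃ m', m = m' + 1 := ⟨m - 1, by omega⟩
    obtain ⟨n', rfl⟩ : ∃ n', n = n' + 1 := ⟨n - 1, by omega⟩
    exact Otsuki.quadrics_common_zero_aux n' m' (by omega) q hq hcon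

/-- **Otsuki's Lemma.** Let `V` and `W` be finite-dimensional real vector spaces and
`β : V × V → W` a symmetric bilinear map such that `β (v, v) ≠ 0` for all `v ≠ 0`, and
assume `dim W < dim V`. Then there exist linearly independent vectors `v₁, v₂ ∈ V` with
`β (v₁, v₁) = β (v₂, v₂)` and `β (v₁, v₂) = 0`. -/
theorem otsuki_lemma
    (V W : Type*) [AddCommGroup V] [Module ℝ V] [FiniteDimensional ℝ V]
    [AddCommGroup W] [Module ℝ W] [FiniteDimensional ℝ W]
    (β : V →ₗ[ℝ] V →ₗ[ℝ] W)
    (hsymm : ∀ v w : V, β v w = β w v)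
    (hdef : ∀ v : V, v ≠ 0 → β v v ≠ 0)
    (hdim : Module.finrank ℝ W < Module.finrank ℝ V) :
    ∃ v₁ v₂ : V, LinearIndependent ℝ ![v₁, v₂] ∧
      β v₁ v₁ = β v₂ v₂ ∧ β v₁ v₂ = 0 := by
  classical
  set n := Module.finrank ℝ V with hn
  set m := Module.finrank ℝ W with hm
  set bV : Module.Basis (Fin n) ℝ V := Module.finBasis ℝ V with hbV
  set bW : Module.Basis (Fin m) ℝ W := Module.finBasis ℝ W with hbW
  set a : Fin m → Fin n → Fin n → ℝ := fun j k l => bW.repr (β (bV k) (bV l)) j with ha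
  have hasymm : ∀ j k l, a j k l = a j l k := by
    intro j k l
    simp [ha, hsymm (bV k) (bV l)]
  set q : Fin m → MvPolynomial (Fin n) ℂ :=
    fun j => ∑ k, ∑ l, C ((a j k l : ℂ)) * (X k * X l) with hq
  have hqhom : ∀ j, (q j).IsHomogeneous 2 := by
    intro j
    apply IsHomogeneous.sum
    intro k _
    apply IsHomogeneous.sum
    intro l _
    have : ((X k : MvPolynomial (Fin n) ℂ) * X l).IsHomogeneous 2 :=
      (isHomogeneous_X _ _).mul (isHomogeneous_X _ _)
    simpa using this.C_mul _
  obtain ⟨z, hz0, hzval⟩ := Otsuki.quadrics_common_zero n m hdim q hqhom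
  set x : Fin n → ℝ := fun k => (z k).re with hx
  set y : Fin n → ℝ := fun k => (z k).im with hy
  set v₁ : V := ∑ k, x k • bV k with hv₁
  set v₂ : V := ∑ k, y k • bV k with hv₂
  -- coordinates of β values
  have hcoord : ∀ (c c' : Fin n → ℝ) (j : Fin m),
      bW.repr (β (∑ k, c k • bV k) (∑ l, c' l • bV l)) j = ∑ k, ∑ l, c k * c' l * a j k l := by
    intro c c' j
    have e : (β (∑ k, c k • bV k)) (∑ l, c' l • bV l)
        = ∑ l, ∑ k, (c k * c' l) • β (bV k) (bV l) := by
      rw [map_sum]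
      refine Finset.sum_congr rfl fun l _ => ?_
      rw [map_smul, map_sum β, LinearMap.sum_apply, Finset.smul_sum]
      refine Finset.sum_congr rfl fun k _ => ?_
      rw [map_smul β, LinearMap.smul_apply, smul_smul, mul_comm]
    rw [e, map_sum, Finsupp.finset_sum_apply]
    have e2 : ∀ l, (bW.repr (∑ k, (c k * c' l) • β (bV k) (bV l))) j
        = ∑ k, c k * c' l * a j k l := by
      intro l
      rw [map_sum, Finsupp.finset_sum_apply]
      refine Finset.sum_congr rfl fun k _ => ?_
      rw [map_smul, Finsupp.smul_apply]
      simp [ha]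
    simp_rw [e2]
    rw [Finset.sum_comm]
  -- evaluate q j at z
  have heval : ∀ j, eval z (q j) = ∑ k, ∑ l, (a j k l : ℂ) * (z k * z l) := by
    intro j
    simp [hq, map_sum, eval_C, eval_X]
  have hre : ∀ j, ∑ k, ∑ l, (x k * x l * a j k l - y k * y l * a j k l) = 0 := by
    intro j
    have h1 := congrArg Complex.re (heval j ▸ hzval j)
    rw [Complex.re_sum] at h1
    simp only [Complex.zero_re] at h1
    rw [← h1]
    apply Finset.sum_congr rfl
    intro k _
    rw [Complex.re_sum]
    apply Finset.sum_congr rfl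
    intro l _
    rw [Complex.re_ofReal_mul, Complex.mul_re]
    simp only [hx, hy]
    ring
  have him : ∀ j, ∑ k, ∑ l, (x k * y l * a j k l + y k * x l * a j k l) = 0 := by
    intro j
    have h1 := congrArg Complex.im (heval j ▸ hzval j)
    rw [Complex.im_sum] at h1
    simp only [Complex.zero_im] at h1
    rw [← h1]
    apply Finset.sum_congr rfl
    intro k _
    rw [Complex.im_sum]
    apply Finset.sum_congr rfl
    intro l _
    rw [Complex.im_ofReal_mul, Complex.mul_im]
    simp only [hx, hy]
    ring
  have hb1 : β v₁ v₁ = β v₂ v₂ := by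
    apply bW.repr.injective
    ext j
    rw [hv₁, hv₂, hcoord, hcoord]
    have h := hre j
    simp only [Finset.sum_sub_distrib] at h
    linarith
  have hb2 : β v₁ v₂ = 0 := by
    apply bW.repr.injective
    ext j
    rw [hv₁, hv₂, hcoord]
    simp only [map_zero, Finsupp.coe_zero, Pi.zero_apply]
    -- ∑∑ x k y l a = 0 using him and symmetry
    have h2 : ∑ k, ∑ l, (x k * y l * a j k l) + ∑ k, ∑ l, (y k * x l * a j k l) = 0 := by
      rw [← Finset.sum_add_distrib]
      rw [← him j]
      apply Finset.sum_congr rfl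
      intro k _
      rw [← Finset.sum_add_distrib]
    have h3 : ∑ k, ∑ l, (y k * x l * a j k l) = ∑ k, ∑ l, (x k * y l * a j k l) := by
      rw [Finset.sum_comm]
      apply Finset.sum_congr rfl
      intro k _
      apply Finset.sum_congr rfl
      intro l _
      rw [hasymm j]
      ring
    rw [h3] at h2
    linarith
  have hv₁eq : v₁ = bV.equivFun.symm x := by rw [hv₁, Module.Basis.equivFun_symm_apply]
  have hv₂eq : v₂ = bV.equivFun.symm y := by rw [hv₂, Module.Basis.equivFun_symm_apply]
  have hv₁0 : v₁ ≠ 0 := by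
    intro h10
    have h20 : v₂ = 0 := by
      by_contra h20
      exact hdef v₂ h20 (hb1 ▸ (h10 ▸ (by simp : β (0 : V) (0 : V) = 0)))
    apply hz0
    have hx0 : x = 0 := by
      have := hv₁eq ▸ h10
      simpa using bV.equivFun.symm.injective (by simpa using this)
    have hy0 : y = 0 := by
      have := hv₂eq ▸ h20
      simpa using bV.equivFun.symm.injective (by simpa using this)
    funext k
    have h1 : (z k).re = 0 := congrFun hx0 k
    have h2 : (z k).im = 0 := congrFun hy0 k
    exact Complex.ext h1 h2
  have hv₂0 : v₂ ≠ 0 := by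
    intro h20
    apply hdef v₁ hv₁0
    rw [hb1, h20]
    simp
  have hP : β v₁ v₁ ≠ 0 := hdef v₁ hv₁0
  refine ⟨v₁, v₂, ?_, hb1, hb2⟩
  rw [LinearIndependent.pair_iff]
  intro s t hst
  have hb2' : β v₂ v₁ = 0 := (hsymm v₂ v₁).trans hb2
  have e1 : β (s • v₁ + t • v₂) v₁ = s • β v₁ v₁ := by
    rw [map_add, map_smul, map_smul, LinearMap.add_apply, LinearMap.smul_apply,
      LinearMap.smul_apply, hb2', smul_zero, add_zero]
  have e2 : β (s • v₁ + t • v₂) v₂ = t • β v₁ v₁ := by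
    rw [map_add, map_smul, map_smul, LinearMap.add_apply, LinearMap.smul_apply,
      LinearMap.smul_apply, hb2, smul_zero, zero_add, hb1]
  rw [hst] at e1 e2
  simp only [map_zero, LinearMap.zero_apply] at e1 e2
  constructor
  · rcases smul_eq_zero.mp e1.symm with h | h
    · exact h
    · exact absurd h hP
  · rcases smul_eq_zero.mp e2.symm with h | h
    · exact h
    · exact absurd h hP

end OtsukiAux
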